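/- Let α ∈ (0,1), β > 0 and γ > 0, and define ψ_γ(x) = x^{-(1+γ)} exp{-(β/(1+αγ)) x^{-(1+αγ)/α}} for x > 0. Then the function x ↦ α x^{1+γ} ψ_γ(x) is twice differentiable on (0,∞) and satisfies the stationary Fokker–Planck equation d²/dx²[α x^{1+γ} ψ_γ(x)] = d/dx[β x^{-1/α} ψ_γ(x)] for all x > 0. -/

import Mathlib

open Real

/-- The unnormalised stationary density
`ψ_γ(x) = x^{-(1+γ)} exp{-(β/(1+αγ)) x^{-(1+αγ)/α}}` solves the stationary
Fokker–Planck equation `(α x^{1+γ} ψ_γ)'' = (β x^{-1/α} ψ_γ)'` on `(0,∞)`. -/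
theorem stmt_7 (α β γ : ℝ) (hα : α ∈ Set.Ioo (0:ℝ) 1) (hβ : 0 < β) (hγ : 0 < γ)
    (ψ h g : ℝ → ℝ)
    (hψ : ∀ x : ℝ, ψ x =
      x ^ (-(1 + γ)) * Real.exp (-(β / (1 + α * γ)) * x ^ (-(1 + α * γ) / α)))
    (hh : ∀ x : ℝ, h x = α * x ^ (1 + γ) * ψ x)
    (hg : ∀ x : ℝ, g x = β * x ^ (-(1/α)) * ψ x) :
    ∀ x : ℝ, 0 < x →
      DifferentiableAt ℝ h x ∧ DifferentiableAt ℝ (deriv h) x ∧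
        deriv (deriv h) x = deriv g x := by
  obtain ⟨hα0, hα1⟩ := hα
  set c : ℝ := -(β / (1 + α * γ)) with hc
  set q : ℝ := -(1 + α * γ) / α with hq
  have hαγ : (0:ℝ) < 1 + α * γ := by positivity
  -- simplified form of h on (0,∞)
  set H : ℝ → ℝ := fun y => α * Real.exp (c * y ^ q) with hH
  have hHeq : ∀ y : ℝ, 0 < y → h y = H y := by
    intro y hy
    rw [hh, hψ, hH]
    have : y ^ (1 + γ) * y ^ (-(1 + γ)) = 1 := by
      rw [← Real.rpow_add hy, show (1 + γ) + -(1 + γ) = (0:ℝ) by ring, Real.rpow_zero]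
    calc α * y ^ (1 + γ) * (y ^ (-(1 + γ)) * Real.exp (c * y ^ q))
        = α * (y ^ (1 + γ) * y ^ (-(1 + γ))) * Real.exp (c * y ^ q) := by ring
      _ = α * Real.exp (c * y ^ q) := by rw [this]; ring
  -- H has derivative g y at every y > 0
  have hHderiv : ∀ y : ℝ, 0 < y → HasDerivAt H (g y) y := by
    intro y hy
    have h1 : HasDerivAt (fun z : ℝ => z ^ q) (q * y ^ (q - 1)) y :=
      Real.hasDerivAt_rpow_const (Or.inl hy.ne')
    have h2 := ((h1.const_mul c).exp.const_mul α)
    refine h2.congr_deriv (Eq.symm ?_)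
    rw [hg, hψ]
    have hexp : -(1/α) + -(1 + γ) = q - 1 := by
      rw [hq]; field_simp; ring
    have hx : y ^ (-(1/α)) * y ^ (-(1 + γ)) = y ^ (q - 1) := by
      rw [← Real.rpow_add hy, hexp]
    have hcoef : α * c * q = β := by
      rw [hc, hq]; field_simp
    calc β * y ^ (-(1/α)) * (y ^ (-(1 + γ)) * Real.exp (c * y ^ q))
        = (β) * (y ^ (-(1/α)) * y ^ (-(1 + γ))) * Real.exp (c * y ^ q) := by ring
      _ = (α * c * q) * y ^ (q - 1) * Real.exp (c * y ^ q) := by rw [hx, hcoef]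
      _ = α * (Real.exp (c * y ^ q) * (c * (q * y ^ (q - 1)))) := by ring
  -- g is differentiable at every y > 0
  have hgdiff : ∀ y : ℝ, 0 < y → DifferentiableAt ℝ g y := by
    intro y hy
    have hgfun : g = fun z : ℝ => β * z ^ (-(1/α)) *
        (z ^ (-(1 + γ)) * Real.exp (c * z ^ q)) := by
      funext z; rw [hg, hψ]
    rw [hgfun]
    have d1 : DifferentiableAt ℝ (fun z : ℝ => z ^ (-(1/α))) y :=
      Real.differentiableAt_rpow_const_of_ne _ hy.ne'
    have d2 : DifferentiableAt ℝ (fun z : ℝ => z ^ (-(1 + γ))) y :=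
      Real.differentiableAt_rpow_const_of_ne _ hy.ne'
    have d3 : DifferentiableAt ℝ (fun z : ℝ => z ^ q) y :=
      Real.differentiableAt_rpow_const_of_ne _ hy.ne'
    exact ((d1.const_mul β).mul (d2.mul ((d3.const_mul c).exp)))
  intro x hx
  have hmem : Set.Ioi (0:ℝ) ∈ nhds x := Ioi_mem_nhds hx
  have hEv : h =ᶠ[nhds x] H :=
    Filter.eventuallyEq_of_mem hmem fun y hy => hHeq y hy
  have hdiff_h : DifferentiableAt ℝ h x :=
    (hEv.differentiableAt_iff).mpr (hHderiv x hx).differentiableAt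
  -- deriv h agrees with g near x
  have hEv2 : deriv h =ᶠ[nhds x] g := by
    refine Filter.eventuallyEq_of_mem hmem fun y hy => ?_
    have hEvy : h =ᶠ[nhds y] H :=
      Filter.eventuallyEq_of_mem (Ioi_mem_nhds hy) fun z hz => hHeq z hz
    rw [hEvy.deriv_eq, (hHderiv y hy).deriv]
  refine ⟨hdiff_h, ?_, ?_⟩
  · exact (hEv2.differentiableAt_iff).mpr (hgdiff x hx)
  · exact hEv2.deriv_eq
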